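/- Let X be an Archimedean vector lattice admitting a positively homogeneous continuous function calculus, let m ∈ ℕ, and suppose that (x_k^1)_k, …, (x_k^m)_k are sequences in X which converge uniformly to x^1, …, x^m, respectively. Then for every h ∈ ℋ_m the sequence (h(x_k^1,…,x_k^m))_k converges uniformly to h(x^1,…,x^m). -/

import Mathlib

/-- A function `h : ℝ^m → ℝ` belongs to `ℋ_m` iff it is continuous and positively
homogeneous. -/
def IsPHC {m : ℕ} (h : (Fin m → ℝ) → ℝ) : Prop :=
  Continuous h ∧ ∀ (c : ℝ), 0 ≤ c → ∀ t : Fin m → ℝ, h (c • t) = c * h t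

/-- A sequence `(x_k)` in a vector lattice converges uniformly to `x` if there is a positive
regulator `e` such that for every `ε > 0` one has `|x_k − x| ≤ ε • e` eventually. -/
def UnifConv {X : Type*} [Lattice X] [AddCommGroup X] [Module ℝ X]
    (x : ℕ → X) (x' : X) : Prop :=
  ∃ e : X, 0 ≤ e ∧ ∀ ε : ℝ, 0 < ε → ∃ k₀ : ℕ, ∀ k ≥ k₀, |x k - x'| ≤ ε • e

namespace SWAux

inductive LP (m : ℕ) : Type
  | zero : LP m
  | lin (c : Fin m → ℝ) : LP m
  | smul (c : ℝ) (p : LP m) : LP m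
  | add (p q : LP m) : LP m
  | sup (p q : LP m) : LP m
  | inf (p q : LP m) : LP m

noncomputable def interp {m : ℕ} : LP m → (Fin m → ℝ) → ℝ
  | .zero => fun _ => 0
  | .lin c => fun t => ∑ j, c j * t j
  | .smul c p => fun t => c * interp p t
  | .add p q => fun t => interp p t + interp q t
  | .sup p q => fun t => interp p t ⊔ interp q t
  | .inf p q => fun t => interp p t ⊓ interp q t

lemma isPHC_linF {m : ℕ} (c : Fin m → ℝ) (F : Finset (Fin m)) :
    IsPHC (fun t => ∑ j ∈ F, c j * t j) := by
  constructor
  · exact continuous_finset_sum _ fun j _ => continuous_const.mul (continuous_apply j)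
  · intro a ha t
    rw [Finset.mul_sum]
    exact Finset.sum_congr rfl fun j _ => by simp [Pi.smul_apply, smul_eq_mul]; ring

lemma isPHC_absF {m : ℕ} (F : Finset (Fin m)) :
    IsPHC (fun t => ∑ j ∈ F, |t j|) := by
  constructor
  · exact continuous_finset_sum _ fun j _ => (continuous_apply j).abs
  · intro a ha t
    rw [Finset.mul_sum]
    exact Finset.sum_congr rfl fun j _ => by
      simp [Pi.smul_apply, smul_eq_mul, abs_mul, abs_of_nonneg ha]

lemma interp_isPHC {m : ℕ} (p : LP m) : IsPHC (interp p) := by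
  induction p with
  | zero => exact ⟨continuous_const, fun c hc t => by simp [interp]⟩
  | lin c => exact isPHC_linF c Finset.univ
  | smul c p ih =>
      exact ⟨continuous_const.mul ih.1, fun a ha t => by
        simp only [interp, ih.2 a ha t]; ring⟩
  | add p q ihp ihq =>
      exact ⟨ihp.1.add ihq.1, fun a ha t => by
        simp only [interp, ihp.2 a ha t, ihq.2 a ha t]; ring⟩
  | sup p q ihp ihq =>
      refine ⟨?_, fun a ha t => ?_⟩
      · simp only [interp]; exact ihp.1.max ihq.1
      · simp only [interp, ihp.2 a ha t, ihq.2 a ha t,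
          mul_max_of_nonneg _ _ ha]
  | inf p q ihp ihq =>
      refine ⟨?_, fun a ha t => ?_⟩
      · simp only [interp]; exact ihp.1.min ihq.1
      · simp only [interp, ihp.2 a ha t, ihq.2 a ha t,
          mul_min_of_nonneg _ _ ha]

lemma interp_lin_single {m : ℕ} (j : Fin m) (c : ℝ) (u : Fin m → ℝ) :
    interp (.lin (Pi.single j c)) u = c * u j := by
  simp only [interp]
  rw [Finset.sum_eq_single j]
  · simp
  · intro i _ hij; simp [Pi.single_apply, hij]
  · simp

end SWAux

namespace SWAux

lemma exists_ne_zero {m : ℕ} {s : Fin m → ℝ} (hs : (∑ j, |s j|) = 1) : ∃ j, s j ≠ 0 := by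
  by_contra hc
  push_neg at hc
  simp [hc] at hs

lemma approx {m : ℕ} {h : (Fin m → ℝ) → ℝ} (hh : IsPHC h) {ε : ℝ} (hε : 0 < ε) :
    ∃ p : LP m, ∀ t, |h t - interp p t| ≤ ε * ∑ j, |t j| := by
  classical
  set τ : (Fin m → ℝ) → ℝ := fun t => ∑ j, |t j| with hτdef
  have hτc : Continuous τ := continuous_finset_sum _ fun j _ => (continuous_apply j).abs
  have hτnonneg : ∀ t, 0 ≤ τ t := fun t => Finset.sum_nonneg fun j _ => abs_nonneg _
  have hτhom : ∀ (c : ℝ), 0 ≤ c → ∀ t, τ (c • t) = c * τ t := fun c hc t =>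
    (isPHC_absF Finset.univ).2 c hc t
  have hτzero : ∀ t, τ t = 0 → t = 0 := by
    intro t ht
    funext j
    have h0 := (Finset.sum_eq_zero_iff_of_nonneg
      (fun j (_ : j ∈ Finset.univ) => abs_nonneg (t j))).1 ht j (Finset.mem_univ j)
    simpa [abs_eq_zero] using h0
  set S : Set (Fin m → ℝ) := {t | τ t = 1} with hSdef
  have hScompact : IsCompact S := by
    have hclosed : IsClosed S := isClosed_eq hτc continuous_const
    refine (isCompact_closedBall (0 : Fin m → ℝ) 1).of_isClosed_subset hclosed ?_
    intro t ht
    rw [Metric.mem_closedBall, dist_zero_right]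
    refine (pi_norm_le_iff_of_nonneg zero_le_one).2 fun j => ?_
    have h1 : |t j| ≤ τ t :=
      Finset.single_le_sum (f := fun i => |t i|) (fun i _ => abs_nonneg _) (Finset.mem_univ j)
    rw [Real.norm_eq_abs]
    have ht1 : τ t = 1 := ht
    linarith
  haveI : CompactSpace S := isCompact_iff_compactSpace.1 hScompact
  set asCM : LP m → C(S, ℝ) :=
    fun p => ⟨fun z => interp p z, (interp_isPHC p).1.comp continuous_subtype_val⟩ with hasCM
  set L : Set C(S, ℝ) := {f | ∃ p : LP m, ∀ z : S, f z = interp p z.val} with hLdef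
  have nA : L.Nonempty := ⟨asCM .zero, ⟨.zero, fun z => rfl⟩⟩
  have inf_mem : ∀ f ∈ L, ∀ g ∈ L, f ⊓ g ∈ L := by
    rintro f ⟨p, hp⟩ g ⟨q, hq⟩
    exact ⟨.inf p q, fun z => by
      simp [ContinuousMap.inf_apply, hp z, hq z, interp]⟩
  have sup_mem : ∀ f ∈ L, ∀ g ∈ L, f ⊔ g ∈ L := by
    rintro f ⟨p, hp⟩ g ⟨q, hq⟩
    exact ⟨.sup p q, fun z => by
      simp [ContinuousMap.sup_apply, hp z, hq z, interp]⟩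
  have sep : L.SeparatesPointsStrongly := by
    intro v xS yS
    set s : Fin m → ℝ := xS.val with hsdef
    set t : Fin m → ℝ := yS.val with htdef
    have hs1 : τ s = 1 := xS.2
    have ht1 : τ t = 1 := yS.2
    by_cases hxy : xS = yS
    · obtain ⟨j, hj⟩ := exists_ne_zero hs1
      refine ⟨asCM (.lin (Pi.single j (v xS / s j))), ⟨_, fun z => rfl⟩, ?_, ?_⟩
      · show interp (.lin (Pi.single j (v xS / s j))) s = v xS
        rw [interp_lin_single, div_mul_cancel₀ _ hj]
      · subst hxy
        show interp (.lin (Pi.single j (v xS / s j))) s = v xS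
        rw [interp_lin_single, div_mul_cancel₀ _ hj]
    · have hst : s ≠ t := fun hc => hxy (Subtype.ext hc)
      set ip : (Fin m → ℝ) → (Fin m → ℝ) → ℝ := fun u w => ∑ j, u j * w j with hipdef
      have ipsymm : ∀ u w, ip u w = ip w u := fun u w =>
        Finset.sum_congr rfl fun j _ => mul_comm _ _
      have ippos : ∀ u : Fin m → ℝ, τ u = 1 → 0 < ip u u := by
        intro u hu
        obtain ⟨j, hj⟩ := exists_ne_zero hu
        have h2 : 0 < u j * u j := mul_self_pos.2 hj
        exact lt_of_lt_of_le h2 (Finset.single_le_sum (f := fun i => u i * u i)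
          (fun i _ => mul_self_nonneg _) (Finset.mem_univ j))
      set D : ℝ := ip s s * ip t t - ip s t * ip s t with hDdef
      by_cases hD : D = 0
      · -- degenerate case : t = -s
        have htt : 0 < ip t t := ippos t ht1
        have expand : ∑ j, (ip t t * s j - ip s t * t j)^2 = ip t t * D := by
          have e1 : ∀ j ∈ Finset.univ, (ip t t * s j - ip s t * t j)^2
              = (ip t t)^2 * (s j * s j) - (2*(ip t t)*(ip s t)) * (s j * t j)
                + (ip s t)^2 * (t j * t j) := fun j _ => by ring
          rw [Finset.sum_congr rfl e1, Finset.sum_add_distrib, Finset.sum_sub_distrib,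
            ← Finset.mul_sum, ← Finset.mul_sum, ← Finset.mul_sum]
          show (ip t t)^2 * ip s s - 2*(ip t t)*(ip s t) * (ip s t)
              + (ip s t)^2 * (ip t t) = ip t t * D
          rw [hDdef]; ring
        have hzero : ∀ j, ip t t * s j - ip s t * t j = 0 := by
          intro j
          have hsum : ∑ j, (ip t t * s j - ip s t * t j)^2 = 0 := by
            rw [expand, hD, mul_zero]
          have := (Finset.sum_eq_zero_iff_of_nonneg
            (fun j (_ : j ∈ Finset.univ) => sq_nonneg (ip t t * s j - ip s t * t j))).1
            hsum j (Finset.mem_univ j)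
          exact pow_eq_zero_iff (two_ne_zero) |>.1 this
        set lam : ℝ := ip s t / ip t t with hlamdef
        have hs_eq : ∀ j, s j = lam * t j := by
          intro j
          have h1 : ip t t * s j = ip s t * t j := by have := hzero j; linarith
          rw [hlamdef]
          field_simp
          linarith
        have hτs : τ s = |lam| * τ t := by
          calc τ s = ∑ j, |lam * t j| := Finset.sum_congr rfl fun j _ => by rw [hs_eq j]
          _ = ∑ j, |lam| * |t j| := by simp [abs_mul]
          _ = |lam| * τ t := by rw [hτdef, Finset.mul_sum]
        have hlam1 : |lam| = 1 := by rw [hs1, ht1, mul_one] at hτs; linarith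
        have hlamneg : lam = -1 := by
          rcases (abs_eq (by norm_num : (0:ℝ) ≤ 1)).1 hlam1 with h1 | h1
          · exfalso; exact hst (funext fun j => by rw [hs_eq j, h1, one_mul])
          · exact h1
        obtain ⟨j₀, hj₀⟩ := exists_ne_zero hs1
        set l : LP m := .lin (Pi.single j₀ (1 / s j₀)) with hldef
        have hls : interp l s = 1 := by rw [hldef, interp_lin_single, div_mul_cancel₀]; exact hj₀
        have hlt : interp l t = -1 := by
          rw [hldef, interp_lin_single]
          have : t j₀ = -s j₀ := by rw [hs_eq j₀, hlamneg]; ring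
          rw [this]
          field_simp
        set p : LP m := .add (.smul (v xS) (.sup l .zero))
          (.smul (v yS) (.sup (.smul (-1) l) .zero)) with hpdef
        refine ⟨asCM p, ⟨p, fun z => rfl⟩, ?_, ?_⟩
        · show v xS * (interp l s ⊔ (0:ℝ)) + v yS * ((-1 * interp l s) ⊔ (0:ℝ)) = v xS
          rw [hls]
          norm_num
        · show v xS * (interp l t ⊔ (0:ℝ)) + v yS * ((-1 * interp l t) ⊔ (0:ℝ)) = v yS
          rw [hlt]
          norm_num
      · -- independent case : explicit linear interpolation
        set a : ℝ := v xS with hadef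
        set b : ℝ := v yS with hbdef
        set al : ℝ := (a * ip t t - b * ip s t) / D with haldef
        set be : ℝ := (b * ip s s - a * ip s t) / D with hbedef
        set c : Fin m → ℝ := fun j => al * s j + be * t j with hcdef
        have hsum : ∀ u : Fin m → ℝ, interp (.lin c) u = al * ip s u + be * ip t u := by
          intro u
          simp only [interp, hcdef]
          rw [Finset.sum_congr rfl (fun j (_ : j ∈ Finset.univ) =>
            (by ring : (al * s j + be * t j) * u j = al * (s j * u j) + be * (t j * u j)))]
          rw [Finset.sum_add_distrib, ← Finset.mul_sum, ← Finset.mul_sum]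
        refine ⟨asCM (.lin c), ⟨_, fun z => rfl⟩, ?_, ?_⟩
        · show interp (.lin c) s = v xS
          rw [hsum s, ipsymm t s]
          rw [haldef, hbedef]
          field_simp
          rw [hDdef]; ring
        · show interp (.lin c) t = v yS
          rw [hsum t, ipsymm t t]  -- no-op for second
          rw [haldef, hbedef]
          field_simp
          rw [hDdef]; ring
  have htop := ContinuousMap.sublattice_closure_eq_top L nA inf_mem sup_mem sep
  set hCM : C(S, ℝ) := ⟨fun z => h z.val, hh.1.comp continuous_subtype_val⟩ with hCMdef
  have hmem : hCM ∈ closure L := by rw [htop]; trivial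
  obtain ⟨f, hfL, hdist⟩ := Metric.mem_closure_iff.1 hmem ε hε
  obtain ⟨p, hp⟩ := hfL
  refine ⟨p, ?_⟩
  have hball : ∀ z : S, |h z.val - interp p z.val| ≤ ε := by
    intro z
    have h2 := ContinuousMap.dist_apply_le_dist (f := hCM) (g := f) z
    rw [Real.dist_eq, hp z] at h2
    exact le_of_lt (lt_of_le_of_lt h2 hdist)
  intro t
  rcases eq_or_lt_of_le (hτnonneg t) with h0 | hpos
  · have ht0 : t = 0 := hτzero t h0.symm
    have hzh : h 0 = 0 := by
      have := hh.2 0 le_rfl 0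
      rwa [zero_smul, zero_mul] at this
    have hzp : interp p 0 = 0 := by
      have := (interp_isPHC p).2 0 le_rfl 0
      rwa [zero_smul, zero_mul] at this
    rw [ht0, hzh, hzp]
    simp
  · set z : Fin m → ℝ := (τ t)⁻¹ • t with hzdef
    have hz1 : τ z = 1 := by
      rw [hzdef, hτhom _ (inv_nonneg.2 hpos.le) t]
      field_simp
    have hts : t = τ t • z := by
      rw [hzdef, smul_smul, mul_inv_cancel₀ hpos.ne', one_smul]
    have h1 : h t = τ t * h z := by
      conv_lhs => rw [hts]
      exact hh.2 _ hpos.le z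
    have h2 : interp p t = τ t * interp p z := by
      conv_lhs => rw [hts]
      exact (interp_isPHC p).2 _ hpos.le z
    calc |h t - interp p t| = |τ t * (h z - interp p z)| := by rw [h1, h2, mul_sub]
    _ = τ t * |h z - interp p z| := by rw [abs_mul, abs_of_nonneg hpos.le]
    _ ≤ τ t * ε := mul_le_mul_of_nonneg_left (hball ⟨z, hz1⟩) hpos.le
    _ = ε * τ t := mul_comm _ _

end SWAux

namespace SWAux

section Xside
variable {X : Type*} [Lattice X] [AddCommGroup X] [Module ℝ X]
    [CovariantClass X X (· + ·) (· ≤ ·)] [PosSMulMono ℝ X]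

def oacm : IsOrderedAddMonoid X :=
  { add_le_add_left := fun _ _ h c => add_le_add h le_rfl }

attribute [local instance] oacm

lemma smul_le_smul_right_nonneg {c c' : ℝ} (h : c ≤ c') {v : X} (hv : 0 ≤ v) :
    c • v ≤ c' • v := by
  have h0 : 0 ≤ (c' - c) • v := smul_nonneg (by linarith) hv
  rw [sub_smul] at h0
  exact sub_nonneg.1 h0

lemma abs_smul_le (c : ℝ) (v : X) : |c • v| ≤ |c| • |v| := by
  rcases le_total 0 c with hc | hc
  · rw [abs_of_nonneg hc]
    refine abs_le'.2 ⟨smul_le_smul_of_nonneg_left (le_abs_self v) hc, ?_⟩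
    rw [← smul_neg]
    exact smul_le_smul_of_nonneg_left (neg_le_abs v) hc
  · rw [abs_of_nonpos hc]
    refine abs_le'.2 ⟨?_, ?_⟩
    · rw [show c • v = (-c) • (-v) by rw [neg_smul, smul_neg, neg_neg]]
      exact smul_le_smul_of_nonneg_left (neg_le_abs v) (by linarith)
    · rw [← neg_smul]
      exact smul_le_smul_of_nonneg_left (le_abs_self v) (by linarith)

lemma abs_sum_le {ι : Type*} (F : Finset ι) (f : ι → X) :
    |∑ i ∈ F, f i| ≤ ∑ i ∈ F, |f i| := by
  classical
  induction F using Finset.induction with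
  | empty => simp
  | insert _ _ hj ih =>
      rw [Finset.sum_insert hj, Finset.sum_insert hj]
      exact le_trans (abs_add_le _ _) (add_le_add_right ih _)

lemma abs_sup_sub_sup (a b c d : X) : |a ⊔ b - c ⊔ d| ≤ |a - c| + |b - d| := by
  calc |a ⊔ b - c ⊔ d| = |(a ⊔ b - c ⊔ b) + (c ⊔ b - c ⊔ d)| := by rw [sub_add_sub_cancel]
  _ ≤ |a ⊔ b - c ⊔ b| + |c ⊔ b - c ⊔ d| := abs_add_le _ _
  _ ≤ |a - c| + |b - d| := add_le_add (abs_sup_sub_sup_le_abs a c b)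
      (by rw [sup_comm c b, sup_comm c d]; exact abs_sup_sub_sup_le_abs b d c)

lemma abs_inf_sub_inf (a b c d : X) : |a ⊓ b - c ⊓ d| ≤ |a - c| + |b - d| := by
  calc |a ⊓ b - c ⊓ d| = |(a ⊓ b - c ⊓ b) + (c ⊓ b - c ⊓ d)| := by rw [sub_add_sub_cancel]
  _ ≤ |a ⊓ b - c ⊓ b| + |c ⊓ b - c ⊓ d| := abs_add_le _ _
  _ ≤ |a - c| + |b - d| := add_le_add (abs_inf_sub_inf_le_abs a c b)
      (by rw [inf_comm c b, inf_comm c d]; exact abs_inf_sub_inf_le_abs b d c)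

noncomputable def evalX {m : ℕ} : LP m → (Fin m → X) → X
  | .zero => fun _ => 0
  | .lin c => fun y => ∑ j, c j • y j
  | .smul c p => fun y => c • evalX p y
  | .add p q => fun y => evalX p y + evalX q y
  | .sup p q => fun y => evalX p y ⊔ evalX q y
  | .inf p q => fun y => evalX p y ⊓ evalX q y

lemma evalX_lip {m : ℕ} (p : LP m) :
    ∃ C : ℝ, 0 ≤ C ∧ ∀ y z : Fin m → X,
      |evalX p y - evalX p z| ≤ C • ∑ j, |y j - z j| := by
  induction p with
  | zero => exact ⟨0, le_rfl, fun y z => by simp [evalX]⟩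
  | lin c =>
      refine ⟨∑ j, |c j|, Finset.sum_nonneg fun j _ => abs_nonneg _, fun y z => ?_⟩
      have h1 : evalX (X := X) (.lin c) y - evalX (.lin c) z = ∑ j, c j • (y j - z j) := by
        simp [evalX, Finset.sum_sub_distrib, smul_sub]
      rw [h1]
      calc |∑ j, c j • (y j - z j)| ≤ ∑ j, |c j • (y j - z j)| := abs_sum_le _ _
      _ ≤ ∑ j, |c j| • |y j - z j| := Finset.sum_le_sum fun j _ => abs_smul_le _ _
      _ ≤ ∑ j, (∑ i, |c i|) • |y j - z j| := Finset.sum_le_sum fun j _ =>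
          smul_le_smul_right_nonneg (Finset.single_le_sum (f := fun i => |c i|)
            (fun i _ => abs_nonneg _) (Finset.mem_univ j)) (abs_nonneg _)
      _ = (∑ i, |c i|) • ∑ j, |y j - z j| := (Finset.smul_sum).symm
  | smul c p ih =>
      obtain ⟨C, hC0, hC⟩ := ih
      refine ⟨|c| * C, mul_nonneg (abs_nonneg c) hC0, fun y z => ?_⟩
      have h1 : evalX (X := X) (.smul c p) y - evalX (.smul c p) z
          = c • (evalX p y - evalX p z) := by simp [evalX, smul_sub]
      rw [h1]
      calc |c • (evalX p y - evalX p z)| ≤ |c| • |evalX p y - evalX p z| := abs_smul_le _ _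
      _ ≤ |c| • (C • ∑ j, |y j - z j|) :=
          smul_le_smul_of_nonneg_left (hC y z) (abs_nonneg c)
      _ = (|c| * C) • ∑ j, |y j - z j| := smul_smul _ _ _
  | add p q ihp ihq =>
      obtain ⟨Cp, hCp0, hCp⟩ := ihp
      obtain ⟨Cq, hCq0, hCq⟩ := ihq
      refine ⟨Cp + Cq, by linarith, fun y z => ?_⟩
      have h1 : evalX (X := X) (.add p q) y - evalX (.add p q) z
          = (evalX p y - evalX p z) + (evalX q y - evalX q z) := by
        simp only [evalX]; abel
      rw [h1, add_smul]
      exact le_trans (abs_add_le _ _) (add_le_add (hCp y z) (hCq y z))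
  | sup p q ihp ihq =>
      obtain ⟨Cp, hCp0, hCp⟩ := ihp
      obtain ⟨Cq, hCq0, hCq⟩ := ihq
      refine ⟨Cp + Cq, by linarith, fun y z => ?_⟩
      rw [add_smul]
      exact le_trans (abs_sup_sub_sup _ _ _ _) (add_le_add (hCp y z) (hCq y z))
  | inf p q ihp ihq =>
      obtain ⟨Cp, hCp0, hCp⟩ := ihp
      obtain ⟨Cq, hCq0, hCq⟩ := ihq
      refine ⟨Cp + Cq, by linarith, fun y z => ?_⟩
      rw [add_smul]
      exact le_trans (abs_inf_sub_inf _ _ _ _) (add_le_add (hCp y z) (hCq y z))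

end Xside

end SWAux

namespace SWAux
section Phi
variable {X : Type*} [Lattice X] [AddCommGroup X] [Module ℝ X]
    [CovariantClass X X (· + ·) (· ≤ ·)] [PosSMulMono ℝ X]
    (Φ : ∀ m : ℕ, (Fin m → X) → ((Fin m → ℝ) → ℝ) → X)

attribute [local instance] oacm

lemma isPHC_zero {m : ℕ} : IsPHC (0 : (Fin m → ℝ) → ℝ) :=
  ⟨continuous_const, fun c hc t => by simp⟩

lemma isPHC_smulF {m : ℕ} (c : ℝ) {f : (Fin m → ℝ) → ℝ} (hf : IsPHC f) : IsPHC (c • f) := by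
  refine ⟨continuous_const.mul hf.1, fun a ha t => ?_⟩
  simp only [Pi.smul_apply, smul_eq_mul, hf.2 a ha t]
  ring

lemma isPHC_addF {m : ℕ} {f g : (Fin m → ℝ) → ℝ} (hf : IsPHC f) (hg : IsPHC g) :
    IsPHC (f + g) := by
  refine ⟨hf.1.add hg.1, fun a ha t => ?_⟩
  simp only [Pi.add_apply, hf.2 a ha t, hg.2 a ha t]
  ring

lemma isPHC_supF {m : ℕ} {f g : (Fin m → ℝ) → ℝ} (hf : IsPHC f) (hg : IsPHC g) :
    IsPHC (f ⊔ g) := by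
  refine ⟨?_, fun a ha t => ?_⟩
  · have : (f ⊔ g) = fun t => max (f t) (g t) := rfl
    rw [this]; exact hf.1.max hg.1
  · simp only [Pi.sup_apply, hf.2 a ha t, hg.2 a ha t, mul_max_of_nonneg _ _ ha]

lemma isPHC_proj {m : ℕ} (j : Fin m) : IsPHC (fun t : Fin m → ℝ => t j) :=
  ⟨continuous_apply j, fun c hc t => rfl⟩

variable
    (hΦadd : ∀ (m) (x : Fin m → X) (h g), IsPHC h → IsPHC g →
      Φ m x (h + g) = Φ m x h + Φ m x g)
    (hΦsmul : ∀ (m) (x : Fin m → X) (c : ℝ) (h), IsPHC h → Φ m x (c • h) = c • Φ m x h)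
    (hΦsup : ∀ (m) (x : Fin m → X) (h g), IsPHC h → IsPHC g →
      Φ m x (h ⊔ g) = Φ m x h ⊔ Φ m x g)
    (hΦproj : ∀ (m) (x : Fin m → X) (k : Fin m), Φ m x (fun t => t k) = x k)

include hΦsup in
lemma phi_mono {m : ℕ} (y : Fin m → X) {f g : (Fin m → ℝ) → ℝ}
    (hf : IsPHC f) (hg : IsPHC g) (hle : ∀ t, f t ≤ g t) : Φ m y f ≤ Φ m y g := by
  have hfg : f ⊔ g = g := funext fun t => sup_eq_right.2 (hle t)
  have h1 := hΦsup m y f g hf hg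
  rw [hfg] at h1
  rw [h1]
  exact le_sup_left

include hΦadd in
lemma phi_zero {m : ℕ} (y : Fin m → X) : Φ m y 0 = 0 := by
  have h1 := hΦadd m y 0 0 isPHC_zero isPHC_zero
  rw [add_zero] at h1
  exact add_eq_left.1 h1.symm

include hΦadd hΦsmul hΦproj in
lemma phi_lin {m : ℕ} (y : Fin m → X) (c : Fin m → ℝ) (F : Finset (Fin m)) :
    Φ m y (fun t => ∑ j ∈ F, c j * t j) = ∑ j ∈ F, c j • y j := by
  classical
  induction F using Finset.induction with
  | empty =>
      have h0 : (fun t : Fin m → ℝ => ∑ j ∈ (∅ : Finset (Fin m)), c j * t j)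
          = (0 : (Fin m → ℝ) → ℝ) := by funext t; simp
      rw [h0, phi_zero Φ hΦadd y]
      simp
  | @insert a F hj ih =>
      have hfun : (fun t : Fin m → ℝ => ∑ j ∈ insert a F, c j * t j)
          = (fun t => c a * t a) + fun t => ∑ j ∈ F, c j * t j := by
        funext t; simp [Finset.sum_insert hj]
      have h1 : (fun t : Fin m → ℝ => c a * t a)
          = c a • fun t : Fin m → ℝ => t a := rfl
      rw [hfun, hΦadd m y _ _ (by rw [h1]; exact isPHC_smulF _ (isPHC_proj a))
        (isPHC_linF c F), ih, h1, hΦsmul m y (c a) _ (isPHC_proj a), hΦproj m y a,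
        Finset.sum_insert hj]

include hΦadd hΦsmul hΦsup hΦproj in
lemma phi_absF {m : ℕ} (y : Fin m → X) (F : Finset (Fin m)) :
    Φ m y (fun t => ∑ j ∈ F, |t j|) = ∑ j ∈ F, |y j| := by
  classical
  induction F using Finset.induction with
  | empty =>
      have h0 : (fun t : Fin m → ℝ => ∑ j ∈ (∅ : Finset (Fin m)), |t j|)
          = (0 : (Fin m → ℝ) → ℝ) := by funext t; simp
      rw [h0, phi_zero Φ hΦadd y]
      simp
  | @insert a F hj ih =>
      have hfun : (fun t : Fin m → ℝ => ∑ j ∈ insert a F, |t j|)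
          = (fun t => |t a|) + fun t => ∑ j ∈ F, |t j| := by
        funext t; simp [Finset.sum_insert hj]
      have habs : (fun t : Fin m → ℝ => |t a|)
          = (fun t : Fin m → ℝ => t a) ⊔ ((-1 : ℝ) • fun t : Fin m → ℝ => t a) := by
        funext t
        simp only [Pi.sup_apply, Pi.smul_apply, smul_eq_mul, neg_one_mul]
        exact abs_eq_max_neg
      have hPHCa : IsPHC fun t : Fin m → ℝ => |t a| := by
        rw [habs]; exact isPHC_supF (isPHC_proj a) (isPHC_smulF _ (isPHC_proj a))
      rw [hfun, hΦadd m y _ _ hPHCa (isPHC_absF F), ih, habs,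
        hΦsup m y _ _ (isPHC_proj a) (isPHC_smulF _ (isPHC_proj a)),
        hΦsmul m y (-1) _ (isPHC_proj a), hΦproj m y a, Finset.sum_insert hj,
        neg_one_smul]
      rfl

include hΦadd hΦsmul hΦsup hΦproj in
lemma phi_interp {m : ℕ} (y : Fin m → X) (p : LP m) :
    Φ m y (interp p) = evalX p y := by
  induction p with
  | zero => exact phi_zero Φ hΦadd y
  | lin c => exact phi_lin Φ hΦadd hΦsmul hΦproj y c Finset.univ
  | smul c p ih =>
      have h1 : interp (.smul c p) = c • interp p := rfl
      rw [h1, hΦsmul m y c _ (interp_isPHC p), ih]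
      rfl
  | add p q ihp ihq =>
      have h1 : interp (.add p q) = interp p + interp q := rfl
      rw [h1, hΦadd m y _ _ (interp_isPHC p) (interp_isPHC q), ihp, ihq]
      rfl
  | sup p q ihp ihq =>
      have h1 : interp (.sup p q) = interp p ⊔ interp q := rfl
      rw [h1, hΦsup m y _ _ (interp_isPHC p) (interp_isPHC q), ihp, ihq]
      rfl
  | inf p q ihp ihq =>
      have hkey : interp (.inf p q)
          = (-1 : ℝ) • (((-1 : ℝ) • interp p) ⊔ ((-1 : ℝ) • interp q)) := by
        funext t
        simp only [interp, Pi.smul_apply, Pi.sup_apply, smul_eq_mul, neg_one_mul, neg_sup,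
          neg_neg]
      rw [hkey, hΦsmul m y (-1) _ (isPHC_supF (isPHC_smulF _ (interp_isPHC p))
          (isPHC_smulF _ (interp_isPHC q))),
        hΦsup m y _ _ (isPHC_smulF _ (interp_isPHC p)) (isPHC_smulF _ (interp_isPHC q)),
        hΦsmul m y (-1) _ (interp_isPHC p), hΦsmul m y (-1) _ (interp_isPHC q), ihp, ihq]
      show (-1 : ℝ) • (((-1 : ℝ) • evalX p y) ⊔ ((-1 : ℝ) • evalX q y))
          = evalX p y ⊓ evalX q y
      rw [neg_one_smul, neg_one_smul, neg_one_smul, neg_sup, neg_neg, neg_neg]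

end Phi
end SWAux

open SWAux

/-- Let `X` be an Archimedean vector lattice admitting a positively
homogeneous continuous function calculus `Φ`, and suppose the sequences `(x_k^1), …, (x_k^m)`
converge uniformly to `x^1, …, x^m`. Then `(h(x_k^1,…,x_k^m))` converges uniformly to
`h(x^1,…,x^m)` for every `h ∈ ℋ_m`. -/
theorem function_calculus_preserves_uniform_convergence
    {X : Type*}
    [Lattice X] [AddCommGroup X] [Module ℝ X]
    [CovariantClass X X (· + ·) (· ≤ ·)] [PosSMulMono ℝ X]
    (harchX : ∀ x y : X, (∀ n : ℕ, n • x ≤ y) → x ≤ 0)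
    -- the positively homogeneous continuous function calculus on `X`
    (Φ : ∀ m : ℕ, (Fin m → X) → ((Fin m → ℝ) → ℝ) → X)
    (hΦadd : ∀ (m) (x : Fin m → X) (h g), IsPHC h → IsPHC g →
      Φ m x (h + g) = Φ m x h + Φ m x g)
    (hΦsmul : ∀ (m) (x : Fin m → X) (c : ℝ) (h), IsPHC h → Φ m x (c • h) = c • Φ m x h)
    (hΦsup : ∀ (m) (x : Fin m → X) (h g), IsPHC h → IsPHC g →
      Φ m x (h ⊔ g) = Φ m x h ⊔ Φ m x g)
    (hΦproj : ∀ (m) (x : Fin m → X) (k : Fin m), Φ m x (fun t => t k) = x k)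
    {m : ℕ} (x : Fin m → ℕ → X) (x' : Fin m → X)
    (hconv : ∀ j : Fin m, UnifConv (x j) (x' j)) :
    ∀ h : (Fin m → ℝ) → ℝ, IsPHC h →
      UnifConv (fun k => Φ m (fun j => x j k) h) (Φ m x' h) := by
  letI : IsOrderedAddMonoid X := oacm
  intro h hh
  classical
  choose e he0 hek using hconv
  set SX : X := ∑ j, |x' j| with hSXdef
  set Ee : X := ∑ j, e j with hEedef
  have hSX0 : 0 ≤ SX := Finset.sum_nonneg fun j _ => abs_nonneg _
  have hEe0 : 0 ≤ Ee := Finset.sum_nonneg fun j _ => he0 j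
  set E : X := Ee + SX + SX with hEdef
  have hSXE : SX ≤ E := by
    calc SX ≤ Ee + SX := le_add_of_nonneg_left hEe0
    _ ≤ Ee + SX + SX := le_add_of_nonneg_right hSX0
  have hEeE : Ee ≤ E := by
    calc Ee ≤ Ee + SX := le_add_of_nonneg_right hSX0
    _ ≤ Ee + SX + SX := le_add_of_nonneg_right hSX0
  have hSXEeE : SX + Ee ≤ E := by
    rw [hEdef, add_comm SX Ee]
    exact le_add_of_nonneg_right hSX0
  refine ⟨E, le_trans hEe0 hEeE, ?_⟩
  intro ε hε
  set ε3 : ℝ := ε / 3 with hε3def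
  have hε3pos : 0 < ε3 := by rw [hε3def]; linarith
  obtain ⟨p, hp⟩ := approx hh hε3pos
  obtain ⟨C, hC0, hCl⟩ := evalX_lip (X := X) p
  set δ : ℝ := ε3 / (C + 1) with hδdef
  have hδpos : 0 < δ := div_pos hε3pos (by linarith)
  choose k1 hk1 using fun j => hek j 1 one_pos
  choose k2 hk2 using fun j => hek j δ hδpos
  refine ⟨Finset.univ.sup fun j => max (k1 j) (k2 j), fun k hk => ?_⟩
  set y : Fin m → X := fun j => x j k with hydef
  have hky : ∀ j, |y j - x' j| ≤ e j := by
    intro j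
    have h1 : k1 j ≤ k := le_trans (le_trans (le_max_left _ _)
      (Finset.le_sup (f := fun j => max (k1 j) (k2 j)) (Finset.mem_univ j))) hk
    have := hk1 j k h1
    rwa [one_smul] at this
  have hkyδ : ∀ j, |y j - x' j| ≤ δ • e j := fun j => hk2 j k
    (le_trans (le_trans (le_max_right _ _)
      (Finset.le_sup (f := fun j => max (k1 j) (k2 j)) (Finset.mem_univ j))) hk)
  -- the key two-sided estimate
  have key : ∀ w : Fin m → X, |Φ m w h - evalX p w| ≤ ε3 • ∑ j, |w j| := by
    intro w
    set τf : (Fin m → ℝ) → ℝ := fun t => ∑ j, |t j| with hτfdef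
    have hPHCτ : IsPHC τf := isPHC_absF Finset.univ
    have hPHCp := interp_isPHC p
    have hτ : Φ m w τf = ∑ j, |w j| := phi_absF Φ hΦadd hΦsmul hΦsup hΦproj w Finset.univ
    have hPHCε3τ : IsPHC (ε3 • τf) := isPHC_smulF _ hPHCτ
    have h1 : Φ m w h ≤ Φ m w (interp p + ε3 • τf) := by
      refine phi_mono Φ hΦsup w hh (isPHC_addF hPHCp hPHCε3τ) fun t => ?_
      have h2 := hp t
      have h3 := le_abs_self (h t - interp p t)
      simp only [Pi.add_apply, Pi.smul_apply, smul_eq_mul]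
      linarith
    have h1' : Φ m w (interp p) ≤ Φ m w (h + ε3 • τf) := by
      refine phi_mono Φ hΦsup w hPHCp (isPHC_addF hh hPHCε3τ) fun t => ?_
      have h2 := hp t
      have h3 := neg_le_abs (h t - interp p t)
      simp only [Pi.add_apply, Pi.smul_apply, smul_eq_mul]
      linarith
    rw [hΦadd m w _ _ hPHCp hPHCε3τ, hΦsmul m w ε3 _ hPHCτ, hτ,
      phi_interp Φ hΦadd hΦsmul hΦsup hΦproj w p] at h1
    rw [hΦadd m w _ _ hh hPHCε3τ, hΦsmul m w ε3 _ hPHCτ, hτ,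
      phi_interp Φ hΦadd hΦsmul hΦsup hΦproj w p] at h1'
    refine abs_le'.2 ⟨?_, ?_⟩
    · exact sub_le_iff_le_add.2 (h1.trans_eq (add_comm _ _))
    · rw [neg_sub]
      exact sub_le_iff_le_add.2 (h1'.trans_eq (add_comm _ _))
  have t1 : |Φ m y h - evalX p y| ≤ ε3 • (SX + Ee) := by
    refine le_trans (key y) (smul_le_smul_of_nonneg_left ?_ hε3pos.le)
    calc ∑ j, |y j| ≤ ∑ j, (|x' j| + e j) := Finset.sum_le_sum fun j _ => by
          calc |y j| = |(y j - x' j) + x' j| := by rw [sub_add_cancel]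
          _ ≤ |y j - x' j| + |x' j| := abs_add_le _ _
          _ ≤ e j + |x' j| := add_le_add_left (hky j) _
          _ = |x' j| + e j := add_comm _ _
    _ = SX + Ee := by rw [Finset.sum_add_distrib]
  have t3 : |evalX p x' - Φ m x' h| ≤ ε3 • SX := by
    rw [abs_sub_comm]
    exact key x'
  have t2 : |evalX p y - evalX p x'| ≤ (C * δ) • Ee := by
    refine le_trans (hCl y x') ?_
    have hs : ∑ j, |y j - x' j| ≤ δ • Ee := by
      calc ∑ j, |y j - x' j| ≤ ∑ j, δ • e j := Finset.sum_le_sum fun j _ => hkyδ j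
      _ = δ • Ee := (Finset.smul_sum).symm
    calc C • ∑ j, |y j - x' j| ≤ C • (δ • Ee) := smul_le_smul_of_nonneg_left hs hC0
    _ = (C * δ) • Ee := smul_smul _ _ _
  have hb1 : |Φ m y h - evalX p y| ≤ ε3 • E :=
    le_trans t1 (smul_le_smul_of_nonneg_left hSXEeE hε3pos.le)
  have hb3 : |evalX p x' - Φ m x' h| ≤ ε3 • E :=
    le_trans t3 (smul_le_smul_of_nonneg_left hSXE hε3pos.le)
  have hb2 : |evalX p y - evalX p x'| ≤ ε3 • E := by
    have hCδ : C * δ ≤ ε3 := by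
      rw [hδdef, mul_div_assoc']
      rw [div_le_iff₀ (by linarith : (0:ℝ) < C + 1)]
      nlinarith
    refine le_trans t2 (le_trans (smul_le_smul_right_nonneg hCδ hEe0) ?_)
    exact smul_le_smul_of_nonneg_left hEeE hε3pos.le
  have tri : |Φ m y h - Φ m x' h| ≤ |Φ m y h - evalX p y| + |evalX p y - evalX p x'|
      + |evalX p x' - Φ m x' h| := by
    calc |Φ m y h - Φ m x' h|
        = |(Φ m y h - evalX p y) + ((evalX p y - evalX p x') + (evalX p x' - Φ m x' h))| := by
          congr 1; abel
    _ ≤ |Φ m y h - evalX p y| + |(evalX p y - evalX p x') + (evalX p x' - Φ m x' h)| :=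
          abs_add_le _ _
    _ ≤ |Φ m y h - evalX p y| + (|evalX p y - evalX p x'| + |evalX p x' - Φ m x' h|) :=
          add_le_add_right (abs_add_le _ _) _
    _ = _ := by abel
  have hsum3 : ε3 • E + ε3 • E + ε3 • E = ε • E := by
    rw [← add_smul, ← add_smul]
    congr 1
    rw [hε3def]; ring
  calc |Φ m y h - Φ m x' h| ≤ |Φ m y h - evalX p y| + |evalX p y - evalX p x'|
      + |evalX p x' - Φ m x' h| := tri
  _ ≤ ε3 • E + ε3 • E + ε3 • E := add_le_add (add_le_add hb1 hb2) hb3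
  _ = ε • E := hsum3
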